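/- In a pullback diagram of type (□) with T quasilocal and D a proper subfield of the residue field k = T/M: for every star operation ∗ on R = φ⁻¹(D), every ∗-invertible ∗-ideal of R is principal; hence Cl^∗(R) = 0. -/

import Mathlib

open FractionalIdeal

/-- A star operation on an integral domain `R` with quotient field `K`, acting on the
nonzero fractional ideals (the value on the zero ideal is irrelevant). -/
structure StarOp (R K : Type*) [CommRing R] [IsDomain R] [Field K] [Algebra R K]
    [IsFractionRing R K] where
  toFun : FractionalIdeal (nonZeroDivisors R) K → FractionalIdeal (nonZeroDivisors R) K
  star_spanSingleton : ∀ x : K, x ≠ 0 →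
    toFun (spanSingleton (nonZeroDivisors R) x) = spanSingleton (nonZeroDivisors R) x
  star_smul : ∀ (x : K) (E : FractionalIdeal (nonZeroDivisors R) K), x ≠ 0 → E ≠ 0 →
    toFun (spanSingleton (nonZeroDivisors R) x * E) = spanSingleton (nonZeroDivisors R) x * toFun E
  mono : ∀ E F : FractionalIdeal (nonZeroDivisors R) K, E ≠ 0 → F ≠ 0 → E ≤ F →
    toFun E ≤ toFun F
  le_star : ∀ E : FractionalIdeal (nonZeroDivisors R) K, E ≠ 0 → E ≤ toFun E
  star_idem : ∀ E : FractionalIdeal (nonZeroDivisors R) K, E ≠ 0 → toFun (toFun E) = toFun E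

/-- `I` is a `⋆`-invertible `⋆`-ideal of `R`: `I ≠ 0`, `I = I^⋆` and `(I·I⁻¹)^⋆ = R`. -/
def IsStarInv {R K : Type*} [CommRing R] [IsDomain R] [Field K] [Algebra R K]
    [IsFractionRing R K] (s : StarOp R K)
    (I : FractionalIdeal (nonZeroDivisors R) K) : Prop :=
  I ≠ 0 ∧ s.toFun I = I ∧ s.toFun (I * (1 / I)) = 1

attribute [local instance] Ideal.Quotient.field

/-- In a pullback of type (□) with `T` quasilocal and `D` a proper subfield of `k = T/M`:
every `∗`-invertible `∗`-ideal of `R = φ⁻¹(D)` is principal; hence `Cl^∗(R) = 0`. -/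
theorem starInv_principal_of_local_subfield
    {T K : Type*} [CommRing T] [IsDomain T] [IsLocalRing T]
    [Field K] [Algebra T K] [IsFractionRing T K]
    (M : Ideal T) [M.IsMaximal] (hM : M ≠ ⊥)
    (D : Subfield (T ⧸ M)) (hD : D ≠ ⊤)
    (R : Subring T) (hR : R = D.toSubring.comap (Ideal.Quotient.mk M))
    [IsFractionRing ↥R K]
    (s : StarOp ↥R K) (I : FractionalIdeal (nonZeroDivisors ↥R) K) (hI : I ≠ 0)
    (hstar : s.toFun I = I) (hinv : s.toFun (I * (1 / I)) = 1) :
    ∃ x : K, x ≠ 0 ∧ I = FractionalIdeal.spanSingleton (nonZeroDivisors ↥R) x := by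
  have hmem : ∀ t : T, t ∈ R ↔ Ideal.Quotient.mk M t ∈ D := by
    intro t; rw [hR]; rfl
  have hMR : ∀ t : T, t ∈ M → t ∈ R := by
    intro t ht
    rw [hmem, Ideal.Quotient.eq_zero_iff_mem.mpr ht]
    exact zero_mem D
  have hMmax : M = IsLocalRing.maximalIdeal T := IsLocalRing.eq_maximalIdeal inferInstance
  have hunit : ∀ r : ↥R, (r : T) ∉ M → IsUnit r := by
    intro r hr
    have hrT : IsUnit (r : T) := by
      by_contra h
      exact hr (hMmax ▸ h)
    obtain ⟨u, hu⟩ := hrT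
    have hu1 : (↑u⁻¹ : T) * (r : T) = 1 := by
      rw [← hu]; exact u.inv_mul
    have huD : Ideal.Quotient.mk M (↑u⁻¹ : T) ∈ D := by
      have h1 : Ideal.Quotient.mk M (↑u⁻¹ : T) * Ideal.Quotient.mk M (r : T) = 1 := by
        rw [← map_mul (Ideal.Quotient.mk M), hu1, _root_.map_one]
      have hrd : Ideal.Quotient.mk M (r : T) ∈ D := (hmem _).mp r.2
      have heq : Ideal.Quotient.mk M (↑u⁻¹ : T) = (Ideal.Quotient.mk M (r : T))⁻¹ :=
        eq_inv_of_mul_eq_one_left h1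
      rw [heq]
      exact D.inv_mem hrd
    refine IsUnit.of_mul_eq_one (a := r) ⟨(↑u⁻¹ : T), (hmem _).mpr huD⟩ ?_
    ext
    show (r : T) * (↑u⁻¹ : T) = 1
    rw [mul_comm]; exact hu1
  have hunit' : ∀ r : ↥R, IsUnit r → (r : T) ∉ M := by
    intro r hr hrM
    obtain ⟨v, hv⟩ := hr
    have h1M : (1 : T) ∈ M := by
      have hv1 : (v : ↥R) * ↑v⁻¹ = 1 := v.mul_inv
      have hvT : ((v : ↥R) : T) * ((↑v⁻¹ : ↥R) : T) = 1 := by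
        rw [← Subring.coe_mul, hv1]; rfl
      rw [← hvT]
      exact M.mul_mem_right _ (by rw [hv]; exact hrM)
    exact (Ideal.ne_top_iff_one M).mp (Ideal.IsMaximal.ne_top inferInstance) h1M
  haveI : IsLocalRing ↥R := by
    refine IsLocalRing.of_nonunits_add ?_
    intro a b ha hb hab
    have haM : (a : T) ∈ M := by by_contra h; exact ha (hunit a h)
    have hbM : (b : T) ∈ M := by by_contra h; exact hb (hunit b h)
    exact hunit' _ hab (M.add_mem haM hbM)
  -- I * (1/I) ≠ 0
  have hex : ∃ x ∈ I, x ≠ (0 : K) := by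
    by_contra h
    push_neg at h
    exact hI (FractionalIdeal.eq_zero_iff.mpr h)
  obtain ⟨x, hxI, hx0⟩ := hex
  obtain ⟨a, haS, ha⟩ := I.isFractional
  have ha0 : algebraMap (↥R) K a ≠ 0 :=
    IsFractionRing.to_map_ne_zero_of_mem_nonZeroDivisors haS
  have haInv : algebraMap (↥R) K a ∈ (1 / I : FractionalIdeal (nonZeroDivisors ↥R) K) := by
    rw [FractionalIdeal.mem_div_iff_of_ne_zero hI]
    intro y hy
    rw [FractionalIdeal.mem_one_iff]
    obtain ⟨c, hc⟩ := ha y hy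
    exact ⟨c, by rw [hc, Algebra.smul_def]⟩
  have hJ0 : I * (1 / I) ≠ 0 := by
    intro h
    have hmm : x * algebraMap (↥R) K a ∈ I * (1 / I) := FractionalIdeal.mul_mem_mul hxI haInv
    rw [h] at hmm
    exact mul_ne_zero hx0 ha0 ((FractionalIdeal.mem_zero_iff _).mp hmm)
  by_cases hJ : I * (1 / I) = 1
  · have hfin : {P : Ideal ↥R | P.IsMaximal}.Finite := by
      refine Set.Finite.subset (Set.finite_singleton (IsLocalRing.maximalIdeal ↥R)) ?_
      intro P hP
      exact IsLocalRing.eq_maximalIdeal hP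
    have hpr := FractionalIdeal.isPrincipal.of_finite_maximals_of_inv le_rfl hfin I (1 / I) hJ
    obtain ⟨y, hy⟩ := (FractionalIdeal.isPrincipal_iff I).mp hpr
    refine ⟨y, ?_, hy⟩
    intro h
    rw [h, FractionalIdeal.spanSingleton_zero] at hy
    exact hI hy
  · exfalso
    obtain ⟨J₀, hJ₀⟩ := FractionalIdeal.le_one_iff_exists_coeIdeal.mp
      (FractionalIdeal.mul_one_div_le_one (I := I))
    have hJ₀top : J₀ ≠ ⊤ := by
      intro h
      rw [h] at hJ₀
      exact hJ (by rw [← hJ₀]; simp)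
    have hJ₀le : J₀ ≤ IsLocalRing.maximalIdeal ↥R := IsLocalRing.le_maximalIdeal hJ₀top
    have hTR : ∀ t : T, t ∈ R := by
      intro t
      by_cases ht : t = 0
      · rw [ht]; exact R.zero_mem
      have hτ : algebraMap T K t ≠ 0 := fun h =>
        ht ((injective_iff_map_eq_zero _).mp (IsFractionRing.injective T K) t h)
      have hF0 : FractionalIdeal.spanSingleton (nonZeroDivisors ↥R) (algebraMap T K t)⁻¹ ≠ 0 :=
        FractionalIdeal.spanSingleton_ne_zero_iff.mpr (inv_ne_zero hτ)
      have hJF : I * (1 / I) ≤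
          FractionalIdeal.spanSingleton (nonZeroDivisors ↥R) (algebraMap T K t)⁻¹ := by
        rw [← FractionalIdeal.coe_le_coe]
        intro y hy
        rw [FractionalIdeal.mem_coe] at hy ⊢
        rw [← hJ₀] at hy
        obtain ⟨r, hrJ₀, hr⟩ := (FractionalIdeal.mem_coeIdeal _).mp hy
        have hrM : (r : T) ∈ M := by
          by_contra h
          exact mem_nonunits_iff.mp ((IsLocalRing.mem_maximalIdeal r).mp (hJ₀le hrJ₀))
            (hunit r h)
        have htr : t * (r : T) ∈ R := hMR _ (M.mul_mem_left t hrM)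
        rw [FractionalIdeal.mem_spanSingleton]
        refine ⟨⟨t * (r : T), htr⟩, ?_⟩
        rw [Algebra.smul_def]
        have hzz : algebraMap (↥R) K ⟨t * (r : T), htr⟩
            = algebraMap T K t * algebraMap T K (r : T) := by
          show algebraMap T K (t * (r : T)) = _
          rw [_root_.map_mul]
        rw [hzz, mul_assoc, mul_comm (algebraMap T K (r : T)), ← mul_assoc,
          mul_inv_cancel₀ hτ, one_mul, ← hr]
        rfl
      have h1F : (1 : FractionalIdeal (nonZeroDivisors ↥R) K) ≤
          FractionalIdeal.spanSingleton (nonZeroDivisors ↥R) (algebraMap T K t)⁻¹ := by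
        calc (1 : FractionalIdeal (nonZeroDivisors ↥R) K)
            = s.toFun (I * (1 / I)) := hinv.symm
          _ ≤ s.toFun (FractionalIdeal.spanSingleton (nonZeroDivisors ↥R)
              (algebraMap T K t)⁻¹) := s.mono _ _ hJ0 hF0 hJF
          _ = _ := s.star_spanSingleton _ (inv_ne_zero hτ)
      have h1 : (1 : K) ∈
          FractionalIdeal.spanSingleton (nonZeroDivisors ↥R) (algebraMap T K t)⁻¹ := by
        have hmem1 : (1 : K) ∈ (1 : FractionalIdeal (nonZeroDivisors ↥R) K) :=
          (FractionalIdeal.mem_one_iff _).mpr ⟨1, map_one _⟩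
        rw [← FractionalIdeal.mem_coe]
        exact FractionalIdeal.coe_le_coe.mpr h1F (FractionalIdeal.mem_coe.mpr hmem1)
      rw [FractionalIdeal.mem_spanSingleton] at h1
      obtain ⟨z, hz⟩ := h1
      rw [Algebra.smul_def, ← div_eq_mul_inv] at hz
      have hzt : algebraMap (↥R) K z = algebraMap T K t := (div_eq_one_iff_eq hτ).mp hz
      have : (z : T) = t := IsFractionRing.injective T K hzt
      rw [← this]
      exact z.2
    apply hD
    ext c
    simp only [Subfield.mem_top, iff_true]
    obtain ⟨t, rfl⟩ := Ideal.Quotient.mk_surjective c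
    exact (hmem t).mp (hTR t)
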